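/- For every positive root β ∈ Δ⁺ and all r, t ∈ ℕ, the divided power e_β(r)^t / t! lies in the integral form 𝐘_n^>, i.e. in the ℤ[1/2]-subalgebra of Y_n^> generated by the elements e_{i,r}^t / t! (i ∈ I, r, t ∈ ℕ). -/

import Mathlib

/-! Core definitions: the positive Yangian `Y_n^>` over a field, its root vectors,
and ordered PBW monomials. -/

/-- The Cartan matrix entries of `sl_n`, with 0-based indexing of the nodes. -/
def cartan (i j : ℕ) : ℤ :=
  if i = j then 2 else if i + 1 = j ∨ j + 1 = i then -1 else 0

variable (F : Type*) [Field F] (n : ℕ)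

/-- The generator `e_{i,r}` inside the free algebra. -/
def eF (i : Fin (n - 1)) (r : ℕ) : FreeAlgebra F (Fin (n - 1) × ℕ) :=
  FreeAlgebra.ι F (i, r)

/-- The defining relations of the positive Yangian `Y_n^>`:
`[e_{i,r+1}, e_{j,s}] − [e_{i,r}, e_{j,s+1}] = (c_{ij}/2)(e_{i,r} e_{j,s} + e_{j,s} e_{i,r})`,
`[e_{i,r}, e_{j,s}] = 0` if `c_{ij} = 0`, and the Serre relations
`[e_{i,r₁},[e_{i,r₂},e_{j,s}]] + [e_{i,r₂},[e_{i,r₁},e_{j,s}]] = 0` if `c_{ij} = −1`. -/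
inductive YangianRel : FreeAlgebra F (Fin (n - 1) × ℕ) → FreeAlgebra F (Fin (n - 1) × ℕ) → Prop
  | quad (i j : Fin (n - 1)) (r s : ℕ) :
      YangianRel
        ((eF F n i (r+1) * eF F n j s - eF F n j s * eF F n i (r+1))
          - (eF F n i r * eF F n j (s+1) - eF F n j (s+1) * eF F n i r))
        (((cartan i j : F) * (2 : F)⁻¹) •
          (eF F n i r * eF F n j s + eF F n j s * eF F n i r))
  | comm (i j : Fin (n - 1)) (r s : ℕ) (h : cartan i j = 0) :
      YangianRel (eF F n i r * eF F n j s - eF F n j s * eF F n i r) 0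
  | serre (i j : Fin (n - 1)) (r₁ r₂ s : ℕ) (h : cartan i j = -1) :
      YangianRel
        (((eF F n i r₁) * ((eF F n i r₂) * (eF F n j s) - (eF F n j s) * (eF F n i r₂))
            - ((eF F n i r₂) * (eF F n j s) - (eF F n j s) * (eF F n i r₂)) * (eF F n i r₁))
          + ((eF F n i r₂) * ((eF F n i r₁) * (eF F n j s) - (eF F n j s) * (eF F n i r₁))
            - ((eF F n i r₁) * (eF F n j s) - (eF F n j s) * (eF F n i r₁)) * (eF F n i r₂)))
        0

/-- The positive Yangian `Y_n^>` over `F`: the quotient of the free algebra on the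
generators `e_{i,r}` by the defining relations. -/
abbrev Yangian := RingQuot (YangianRel F n)

/-- The generator `e_{i,r}` of `Y_n^>` (equal to `0` for out-of-range `i`, `0`-based). -/
noncomputable def gen (i r : ℕ) : Yangian F n :=
  if h : i < n - 1 then
    RingQuot.mkAlgHom F (YangianRel F n) (eF F n (⟨i, h⟩ : Fin (n - 1)) r)
  else 0

/-- The root vector `e_{[i,j]}(r) = [⋯[[e_{i,r}, e_{i+1,0}], e_{i+2,0}], ⋯, e_{j,0}]`
attached to the positive root `[i,j]` (0-based: `0 ≤ i ≤ j ≤ n−2`) and `r ∈ ℕ`. -/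
noncomputable def rootVec (i j r : ℕ) : Yangian F n :=
  (List.range' (i + 1) (j - i)).foldl
    (fun acc l => acc * gen F n l 0 - gen F n l 0 * acc) (gen F n i r)

/-- Index data `((i,j),r)` for a pair of a positive root `β = [i,j]` and `r ∈ ℕ`. -/
abbrev YIdx : Type := (ℕ × ℕ) × ℕ

/-- The total order on `Δ⁺ × ℕ`: `([i,j],r) ≤ ([i',j'],r')` iff `i < i'`, or `i = i'` and
`j < j'`, or `i = i'`, `j = j'` and `r ≥ r'`. -/
def yIdxLe (a b : YIdx) : Prop :=
  a.1.1 < b.1.1 ∨ (a.1.1 = b.1.1 ∧ (a.1.2 < b.1.2 ∨ (a.1.2 = b.1.2 ∧ b.2 ≤ a.2)))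

instance : DecidableRel yIdxLe := fun a b => by unfold yIdxLe; exact inferInstance

instance : IsTrans YIdx yIdxLe :=
  ⟨fun a b c h1 h2 => by unfold yIdxLe at *; omega⟩

instance : IsAntisymm YIdx yIdxLe :=
  ⟨fun a b h1 h2 => by
    obtain ⟨⟨a1, a2⟩, a3⟩ := a
    obtain ⟨⟨b1, b2⟩, b3⟩ := b
    simp only [yIdxLe] at h1 h2
    have : a1 = b1 ∧ a2 = b2 ∧ a3 = b3 := by omega
    simp [this.1, this.2.1, this.2.2]⟩

instance : IsTotal YIdx yIdxLe := ⟨fun a b => by unfold yIdxLe; omega⟩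

/-- `h : Δ⁺ × ℕ → ℕ` (finitely supported) is valid for `Y_n^>` when its support consists of
pairs `((i,j),r)` with `i ≤ j ≤ n−2` (0-based), i.e. `[i,j]` is a positive root of `sl_n`. -/
def ValidSupp (h : YIdx →₀ ℕ) : Prop :=
  ∀ q ∈ h.support, q.1.1 ≤ q.1.2 ∧ q.1.2 < n - 1

/-- The ordered PBW monomial `E_h = ∏→ e_β(r)^{h(β,r)}`, the product being taken over the
support of `h` in the increasing order of `Δ⁺ × ℕ`. -/
noncomputable def Emon (h : YIdx →₀ ℕ) : Yangian F n :=
  ((h.support.sort yIdxLe).map (fun q => rootVec F n q.1.1 q.1.2 q.2 ^ h q)).prod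

/-- `ℤ[1/2]`, realized as the localization of `ℤ` away from `2`. -/
abbrev ZHalf := Localization.Away (2 : ℤ)

/-- A field in which `2 ≠ 0` is a `ℤ[1/2]`-algebra (via the unique ring map `ℤ[1/2] → 𝕜`). -/
noncomputable instance instAlgebraZHalf (𝕜 : Type*) [Field 𝕜] [NeZero (2 : 𝕜)] :
    Algebra ZHalf 𝕜 :=
  (Localization.awayLift (Int.castRingHom 𝕜) 2
    (by simpa using isUnit_iff_ne_zero.2 (NeZero.ne (2 : 𝕜)))).toAlgebra

/-- The Yangian `Y_n^>` over ℂ is a `ℤ[1/2]`-algebra. -/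
noncomputable instance instAlgebraZHalfYangian (n : ℕ) : Algebra ZHalf (Yangian ℂ n) :=
  RingHom.toAlgebra' ((algebraMap ℂ (Yangian ℂ n)).comp (algebraMap ZHalf ℂ))
    (fun c x => by simpa using Algebra.commutes (algebraMap ZHalf ℂ c) x)

/-- The integral form `𝐘_n^>`: the `ℤ[1/2]`-subalgebra of `Y_n^>` generated by the divided
powers `e_{i,r}^{(t)} = e_{i,r}^t / t!` (`i ∈ I`, `r, t ∈ ℕ`). -/
noncomputable def IntYangian (n : ℕ) : Subalgebra ZHalf (Yangian ℂ n) :=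
  Algebra.adjoin ZHalf
    {x : Yangian ℂ n | ∃ (i r t : ℕ) (_ : i < n - 1),
      x = ((t.factorial : ℂ)⁻¹) • gen ℂ n i r ^ t}


section YangLemmas
variable (n : ℕ)

lemma gen_out_of_range (i r : ℕ) (h : ¬ i < n - 1) : gen ℂ n i r = 0 := by
  rw [gen, dif_neg h]

lemma gen_in_range (i r : ℕ) (h : i < n - 1) :
    gen ℂ n i r = RingQuot.mkAlgHom ℂ (YangianRel ℂ n) (eF ℂ n (⟨i, h⟩ : Fin (n - 1)) r) := by
  rw [gen, dif_pos h]

lemma gen_comm (i j r s : ℕ) (h : i + 2 ≤ j ∨ j + 2 ≤ i) :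
    Commute (gen ℂ n i r) (gen ℂ n j s) := by
  by_cases hi : i < n - 1
  · by_cases hj : j < n - 1
    · have hc : cartan (⟨i, hi⟩ : Fin (n-1)) (⟨j, hj⟩ : Fin (n-1)) = 0 := by
        simp only [cartan]
        rw [if_neg (by omega), if_neg (by omega)]
      have := RingQuot.mkAlgHom_rel ℂ (YangianRel.comm (F := ℂ) (n := n) ⟨i, hi⟩ ⟨j, hj⟩ r s hc)
      rw [map_sub, map_mul, map_mul, map_zero, sub_eq_zero] at this
      rw [gen_in_range n i r hi, gen_in_range n j s hj]
      exact this
    · rw [gen_out_of_range n j s hj]; exact Commute.zero_right _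
  · rw [gen_out_of_range n i r hi]; exact Commute.zero_left _

lemma gen_serre (i j r s : ℕ) (h : i + 1 = j ∨ j + 1 = i) :
    gen ℂ n i r * (gen ℂ n i r * gen ℂ n j s - gen ℂ n j s * gen ℂ n i r)
      = (gen ℂ n i r * gen ℂ n j s - gen ℂ n j s * gen ℂ n i r) * gen ℂ n i r := by
  by_cases hi : i < n - 1
  · by_cases hj : j < n - 1
    · have hc : cartan (⟨i, hi⟩ : Fin (n-1)) (⟨j, hj⟩ : Fin (n-1)) = -1 := by
        simp only [cartan]
        rw [if_neg (by omega), if_pos (by omega)]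
      have := RingQuot.mkAlgHom_rel ℂ
        (YangianRel.serre (F := ℂ) (n := n) ⟨i, hi⟩ ⟨j, hj⟩ r r s hc)
      simp only [map_add, map_sub, map_mul, map_zero] at this
      rw [gen_in_range n i r hi, gen_in_range n j s hj]
      set a := RingQuot.mkAlgHom ℂ (YangianRel ℂ n) (eF ℂ n (⟨i, hi⟩ : Fin (n-1)) r)
      set b := RingQuot.mkAlgHom ℂ (YangianRel ℂ n) (eF ℂ n (⟨j, hj⟩ : Fin (n-1)) s)
      have h2 : (2 : ℂ) • (a * (a * b - b * a) - (a * b - b * a) * a) = 0 := by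
        rw [two_smul]
        exact this
      rcases smul_eq_zero.mp h2 with h' | h'
      · exact absurd h' two_ne_zero
      · exact sub_eq_zero.mp h' 
    · rw [gen_out_of_range n j s hj]; simp
  · rw [gen_out_of_range n i r hi]; simp

end YangLemmas



section RingLemmas

variable {A : Type*} [Ring A]

/-- The adjoint action `a ↦ y*a - a*y` as a ℤ-linear endomorphism. -/
noncomputable def adL (y : A) : Module.End ℤ A :=
  LinearMap.mulLeft ℤ y - LinearMap.mulRight ℤ y

lemma adL_apply (y a : A) : adL y a = y * a - a * y := rfl

lemma adL_mul (y a b : A) : adL y (a * b) = adL y a * b + a * adL y b := by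
  simp only [adL_apply]; noncomm_ring

lemma adL_leibniz (y x : A) (hx : adL y (adL y x) = 0) (k : ℕ) (w : A) :
    (adL y ^ (k + 1)) (x * w) =
      x * (adL y ^ (k + 1)) w + (k + 1) • (adL y x * (adL y ^ k) w) := by
  induction k generalizing w with
  | zero => simp [adL_mul, add_comm]
  | succ k ih =>
      have h1 : (adL y ^ (k + 2)) (x * w) = adL y ((adL y ^ (k + 1)) (x * w)) := by
        rw [pow_succ']; rfl
      rw [h1, ih, map_add, map_nsmul, adL_mul, adL_mul, hx, zero_mul, zero_add]
      have h2 : ∀ m : ℕ, adL y ((adL y ^ m) w) = (adL y ^ (m + 1)) w := by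
        intro m; rw [pow_succ']; rfl
      rw [h2, h2]
      set B := adL y x * (adL y ^ (k + 1)) w with hB
      set P := x * (adL y ^ (k + 1 + 1)) w with hP
      simp only [add_nsmul, two_nsmul, one_nsmul]
      abel

lemma adL_pow_self (y x : A) (hx : adL y (adL y x) = 0) (t : ℕ) :
    (∀ k, t < k → (adL y ^ k) (x ^ t) = 0) ∧
      (adL y ^ t) (x ^ t) = t.factorial • (adL y x) ^ t := by
  induction t with
  | zero =>
      constructor
      · intro k hk
        match k, hk with
        | k + 1, _ =>
          rw [pow_zero, pow_succ, Module.End.mul_apply]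
          have h0 : adL y (1 : A) = 0 := by simp [adL_apply]
          rw [h0, map_zero]
      · simp
  | succ t ih =>
      have hstep : ∀ k : ℕ, (adL y ^ (k + 1)) (x ^ (t + 1)) =
          x * (adL y ^ (k + 1)) (x ^ t) + (k + 1) • (adL y x * (adL y ^ k) (x ^ t)) := by
        intro k
        have hxp : x ^ (t + 1) = x * x ^ t := pow_succ' x t
        rw [hxp, adL_leibniz y x hx]
      constructor
      · intro k hk
        match k, hk with
        | k + 1, hk =>
          rw [hstep, ih.1 _ (by omega), ih.1 _ (by omega)]
          simp
      · rw [hstep, ih.1 _ (by omega), ih.2, mul_zero, zero_add]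
        rw [mul_smul_comm, smul_smul, ← pow_succ', Nat.factorial_succ]


lemma adL_pow_apply (y a : A) (t : ℕ) :
    (adL y ^ t) a =
      ∑ k ∈ Finset.range (t + 1),
        ((-1 : ℤ) ^ (t - k) * (t.choose k : ℤ)) • (y ^ k * a * y ^ (t - k)) := by
  have hc : Commute (LinearMap.mulLeft ℤ y) ((-1 : ℤ) • LinearMap.mulRight ℤ y) :=
    ((LinearMap.commute_mulLeft_right y y)).smul_right _
  have hd : adL y = LinearMap.mulLeft ℤ y + (-1 : ℤ) • LinearMap.mulRight ℤ y := by
    rw [adL, neg_one_zsmul, sub_eq_add_neg]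
  rw [hd, hc.add_pow]
  rw [LinearMap.sum_apply]
  refine Finset.sum_congr rfl fun k hk => ?_
  rw [smul_pow, LinearMap.pow_mulLeft, LinearMap.pow_mulRight]
  have : (LinearMap.mulLeft ℤ (y ^ k) * (-1 : ℤ) ^ (t - k) • LinearMap.mulRight ℤ (y ^ (t - k)) *
      ((t.choose k : ℕ) : Module.End ℤ A)) a
      = ((-1 : ℤ) ^ (t - k) * (t.choose k : ℤ)) • (y ^ k * a * y ^ (t - k)) := by
    rw [Module.End.mul_apply, Module.End.mul_apply]
    have hnat : (((t.choose k : ℕ) : Module.End ℤ A)) a = (t.choose k : ℤ) • a := by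
      simp [Module.End.natCast_apply]
    rw [hnat, map_smul, map_smul, LinearMap.smul_apply, map_smul,
      LinearMap.mulRight_apply, LinearMap.mulLeft_apply]
    rw [smul_smul, mul_comm ((t.choose k : ℤ)) _, mul_assoc]
  exact this


lemma bracket_pow_eq (x y : A) (hx : adL y (adL y x) = 0) (t : ℕ) :
    (t.factorial : ℤ) • (x * y - y * x) ^ t =
      ∑ k ∈ Finset.range (t + 1),
        ((-1 : ℤ) ^ k * (t.choose k : ℤ)) • (y ^ k * x ^ t * y ^ (t - k)) := by
  have h1 := (adL_pow_self y x hx t).2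
  rw [adL_pow_apply] at h1
  have h2 : (adL y x) ^ t = (-1 : ℤ) ^ t • (x * y - y * x) ^ t := by
    rw [adL_apply, (neg_sub (x * y) (y * x)).symm, ← neg_one_zsmul, smul_pow]
  rw [h2] at h1
  have h3 := congrArg (fun u => ((-1 : ℤ) ^ t) • u) h1
  simp only [Finset.smul_sum, smul_smul, smul_comm ((-1 : ℤ) ^ t) (t.factorial)] at h3
  rw [← pow_add, Even.neg_one_pow ⟨t, rfl⟩, one_smul] at h3
  rw [natCast_zsmul, ← h3]
  refine Finset.sum_congr rfl fun k hk => ?_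
  have hk' : k ≤ t := by simpa [Nat.lt_succ_iff] using hk
  congr 1
  rw [← mul_assoc, ← pow_add]
  have : t + (t - k) = k + 2 * (t - k) := by omega
  rw [this, pow_add, pow_mul, neg_one_sq, one_pow, mul_one]

end RingLemmas

section YangLemmas2
variable (n : ℕ)

lemma rootVec_same (i r : ℕ) : rootVec ℂ n i i r = gen ℂ n i r := by
  rw [rootVec, Nat.sub_self]
  rfl

lemma rootVec_succ (i j r : ℕ) (hij : i ≤ j) :
    rootVec ℂ n i (j + 1) r =
      rootVec ℂ n i j r * gen ℂ n (j + 1) 0 - gen ℂ n (j + 1) 0 * rootVec ℂ n i j r := by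
  rw [rootVec, rootVec, show j + 1 - i = (j - i) + 1 by omega, List.range'_concat,
    List.foldl_append]
  simp only [List.foldl_cons, List.foldl_nil]
  congr 2 <;> · congr 1; omega

lemma gen_comm_rootVec (i j r l : ℕ) (hij : i ≤ j) (hl : j + 2 ≤ l) :
    Commute (gen ℂ n l 0) (rootVec ℂ n i j r) := by
  induction j, hij using Nat.le_induction with
  | base => rw [rootVec_same]; exact gen_comm n l i 0 r (Or.inr (by omega))
  | succ j hij ih =>
      rw [rootVec_succ n i j r hij]
      have h1 := ih (by omega)
      have h2 : Commute (gen ℂ n l 0) (gen ℂ n (j + 1) 0) :=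
        gen_comm n l (j + 1) 0 0 (Or.inr (by omega))
      exact (h1.mul_right h2).sub_right (h2.mul_right h1)

lemma serre_rootVec (i j r : ℕ) (hij : i ≤ j) :
    adL (gen ℂ n (j + 1) 0) (adL (gen ℂ n (j + 1) 0) (rootVec ℂ n i j r)) = 0 := by
  induction j, hij using Nat.le_induction with
  | base =>
      rw [rootVec_same]
      have := gen_serre n (i + 1) i 0 r (Or.inr rfl)
      rw [adL_apply, adL_apply, sub_eq_zero]
      exact this
  | succ j hij ih =>
      set y := gen ℂ n (j + 1 + 1) 0 with hy
      set g := gen ℂ n (j + 1) 0 with hg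
      set v := rootVec ℂ n i j r with hv
      have hcv : adL y v = 0 := by
        rw [adL_apply, sub_eq_zero]
        exact gen_comm_rootVec n i j r (j + 1 + 1) hij (by omega)
      have hcg : adL y (adL y g) = 0 := by
        rw [adL_apply, adL_apply, sub_eq_zero]
        exact gen_serre n (j + 1 + 1) (j + 1) 0 0 (Or.inr rfl)
      rw [rootVec_succ n i j r hij, ← hg, ← hv]
      rw [map_sub, adL_mul, adL_mul, hcv, zero_mul, zero_add, mul_zero, add_zero]
      rw [map_sub, adL_mul, adL_mul, hcv, hcg]
      simp


end YangLemmas2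

/-- for every positive root `β = [i,j] ∈ Δ⁺` (0-based: `i ≤ j ≤ n−2`) and all
`r, t ∈ ℕ`, the divided power `e_β(r)^t / t!` lies in the integral form `𝐘_n^>`. -/
theorem stmt_11 (n : ℕ) (hn : 2 ≤ n) (i j r t : ℕ) (hij : i ≤ j) (hj : j < n - 1) :
    ((t.factorial : ℂ)⁻¹) • rootVec ℂ n i j r ^ t ∈ IntYangian n := by

  revert hj
  induction j, hij using Nat.le_induction with
  | base =>
      intro hj
      rw [rootVec_same]
      exact Algebra.subset_adjoin ⟨i, r, t, hj, rfl⟩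
  | succ j hij ih =>
      intro hj
      have ihx := ih (by omega)
      have h0 : (t.factorial : ℂ) ≠ 0 := Nat.cast_ne_zero.2 (Nat.factorial_ne_zero t)
      set y := gen ℂ n (j + 1) 0 with hy
      set v := rootVec ℂ n i j r with hv
      have hser : adL y (adL y v) = 0 := serre_rootVec n i j r hij
      have key := bracket_pow_eq v y hser t
      rw [rootVec_succ n i j r hij, ← hy, ← hv]
      -- pass to ℂ-scalars
      rw [← Int.cast_smul_eq_zsmul ℂ] at key
      simp only [← Int.cast_smul_eq_zsmul ℂ ((-1 : ℤ) ^ _ * _)] at key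
      push_cast at key
      -- key : (t! : ℂ) • (v*y - y*v)^t = ∑ k, ((-1:ℂ)^k * C) • (y^k * v^t * y^(t-k))
      have hgoal : (t.factorial : ℂ)⁻¹ • (v * y - y * v) ^ t =
          ∑ k ∈ Finset.range (t + 1),
            (-1 : ℂ) ^ k • (((k.factorial : ℂ)⁻¹ • y ^ k) * ((t.factorial : ℂ)⁻¹ • v ^ t) *
              (((t - k).factorial : ℂ)⁻¹ • y ^ (t - k))) := by
        have e1 : (t.factorial : ℂ)⁻¹ • (v * y - y * v) ^ t =
            ((t.factorial : ℂ)⁻¹ * (t.factorial : ℂ)⁻¹) •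
              ((t.factorial : ℂ) • (v * y - y * v) ^ t) := by
          rw [smul_smul, mul_assoc, inv_mul_cancel₀ h0, mul_one]
        rw [e1, key, Finset.smul_sum]
        refine Finset.sum_congr rfl fun k hk => ?_
        have hk' : k ≤ t := by simpa [Nat.lt_succ_iff] using hk
        have h0k : (k.factorial : ℂ) ≠ 0 := Nat.cast_ne_zero.2 (Nat.factorial_ne_zero k)
        have h0tk : ((t - k).factorial : ℂ) ≠ 0 := Nat.cast_ne_zero.2 (Nat.factorial_ne_zero _)
        have hC : ((t.choose k : ℂ)) * (k.factorial : ℂ) * ((t - k).factorial : ℂ)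
            = (t.factorial : ℂ) := by
          exact_mod_cast congrArg (Nat.cast (R := ℂ)) (Nat.choose_mul_factorial_mul_factorial hk')
        simp only [smul_mul_assoc, mul_smul_comm, smul_smul]
        congr 1
        field_simp
        ring_nf
        ring_nf at hC
        linear_combination hC
      rw [hgoal]
      refine Subalgebra.sum_mem _ fun k hk => ?_
      have h1 : ((k.factorial : ℂ)⁻¹ • y ^ k) ∈ IntYangian n :=
        Algebra.subset_adjoin ⟨j + 1, 0, k, hj, rfl⟩
      have h3 : (((t - k).factorial : ℂ)⁻¹ • y ^ (t - k)) ∈ IntYangian n :=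
        Algebra.subset_adjoin ⟨j + 1, 0, t - k, hj, rfl⟩
      have hw := mul_mem (mul_mem h1 ihx) h3
      rcases Nat.even_or_odd k with he | ho
      · rw [he.neg_one_pow, one_smul]; exact hw
      · rw [ho.neg_one_pow]
        have hmem := neg_mem hw
        rwa [← neg_one_smul ℂ] at hmem
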